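/- For every natural number n, U_n(x) = 2^0 · 0! · Σ_{ℓ=0}^{n} C(n+ℓ+1, n−ℓ) · C(ℓ, 0) · (2(x−1))^ℓ, i.e., the Chebyshev polynomial of the second kind admits the expansion U_n(x) = Σ_{ℓ=0}^{n} C(n+ℓ+1, n−ℓ) (2(x−1))^ℓ for all real x. -/

import Mathlib

open Polynomial Polynomial.Chebyshev

lemma pascal3 (m k : ℕ) :
    (m+3).choose (k+2) + (m+1).choose k
      = (m+1).choose (k+2) + 2 * ((m+2).choose (k+1)) := by
  rw [Nat.choose_succ_succ (m+2) (k+1), Nat.choose_succ_succ (m+1) (k+1),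
    Nat.choose_succ_succ (m+1) k]
  ring

lemma sum_rec (n : ℕ) (y : ℝ) :
    (∑ ℓ ∈ Finset.range (n+3), ((n+2+ℓ+1).choose (n+2-ℓ) : ℝ) * y ^ ℓ)
      + ∑ ℓ ∈ Finset.range (n+1), ((n+ℓ+1).choose (n-ℓ) : ℝ) * y ^ ℓ
    = (y+2) * ∑ ℓ ∈ Finset.range (n+2), ((n+1+ℓ+1).choose (n+1-ℓ) : ℝ) * y ^ ℓ := by
  have hy : y * ∑ ℓ ∈ Finset.range (n+2), ((n+1+ℓ+1).choose (n+1-ℓ) : ℝ) * y ^ ℓ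
      = ∑ ℓ ∈ Finset.range (n+3), ((n+ℓ+1).choose (n+2-ℓ) : ℝ) * y ^ ℓ := by
    rw [Finset.mul_sum,
      Finset.sum_range_succ' (fun ℓ => ((n+ℓ+1).choose (n+2-ℓ) : ℝ) * y ^ ℓ) (n+2)]
    have h0 : ((n+0+1).choose (n+2-0) : ℝ) * y ^ 0 = 0 := by
      have : (n+0+1).choose (n+2-0) = 0 := Nat.choose_eq_zero_of_lt (by omega)
      simp [this]
    rw [h0, add_zero]
    refine Finset.sum_congr rfl fun ℓ _ => ?_
    have e1 : n + (ℓ+1) + 1 = n + 1 + ℓ + 1 := by omega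
    have e2 : n + 2 - (ℓ+1) = n + 1 - ℓ := by omega
    rw [e1, e2]
    ring
  rw [add_mul, hy]
  -- peel top terms
  have p1 : (∑ ℓ ∈ Finset.range (n+3), ((n+2+ℓ+1).choose (n+2-ℓ) : ℝ) * y ^ ℓ)
      = (∑ ℓ ∈ Finset.range (n+1), ((n+2+ℓ+1).choose (n+2-ℓ) : ℝ) * y ^ ℓ)
        + ((n+2+(n+1)+1).choose (n+2-(n+1)) : ℝ) * y ^ (n+1)
        + ((n+2+(n+1+1)+1).choose (n+2-(n+1+1)) : ℝ) * y ^ (n+1+1) := by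
    rw [show n+3 = n+1+1+1 from rfl, Finset.sum_range_succ, Finset.sum_range_succ]
  have p3 : (∑ ℓ ∈ Finset.range (n+3), ((n+ℓ+1).choose (n+2-ℓ) : ℝ) * y ^ ℓ)
      = (∑ ℓ ∈ Finset.range (n+1), ((n+ℓ+1).choose (n+2-ℓ) : ℝ) * y ^ ℓ)
        + ((n+(n+1)+1).choose (n+2-(n+1)) : ℝ) * y ^ (n+1)
        + ((n+(n+1+1)+1).choose (n+2-(n+1+1)) : ℝ) * y ^ (n+1+1) := by
    rw [show n+3 = n+1+1+1 from rfl, Finset.sum_range_succ, Finset.sum_range_succ]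
  have p4 : (∑ ℓ ∈ Finset.range (n+2), ((n+1+ℓ+1).choose (n+1-ℓ) : ℝ) * y ^ ℓ)
      = (∑ ℓ ∈ Finset.range (n+1), ((n+1+ℓ+1).choose (n+1-ℓ) : ℝ) * y ^ ℓ)
        + ((n+1+(n+1)+1).choose (n+1-(n+1)) : ℝ) * y ^ (n+1) := by
    rw [Finset.sum_range_succ]
  rw [p1, p3, p4]
  have hmain : ∑ ℓ ∈ Finset.range (n+1),
        (((n+2+ℓ+1).choose (n+2-ℓ) : ℝ) * y ^ ℓ + ((n+ℓ+1).choose (n-ℓ) : ℝ) * y ^ ℓ)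
      = ∑ ℓ ∈ Finset.range (n+1),
        (((n+ℓ+1).choose (n+2-ℓ) : ℝ) * y ^ ℓ + 2 * (((n+1+ℓ+1).choose (n+1-ℓ) : ℝ) * y ^ ℓ)) := by
    refine Finset.sum_congr rfl fun ℓ hℓ => ?_
    have hln : ℓ ≤ n := by
      have := Finset.mem_range.mp hℓ; omega
    obtain ⟨k, hk⟩ : ∃ k, n = ℓ + k := ⟨n - ℓ, by omega⟩
    subst hk
    have e1 : ℓ + k + 2 - ℓ = k + 2 := by omega
    have e2 : ℓ + k - ℓ = k := by omega
    have e3 : ℓ + k + 1 - ℓ = k + 1 := by omega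
    rw [e1, e2, e3]
    have h := pascal3 (ℓ + k + ℓ) k
    have h' : ((ℓ+k+ℓ+3).choose (k+2) : ℝ) + ((ℓ+k+ℓ+1).choose k : ℝ)
        = ((ℓ+k+ℓ+1).choose (k+2) : ℝ) + 2 * ((ℓ+k+ℓ+2).choose (k+1) : ℝ) := by
      exact_mod_cast congrArg (Nat.cast : ℕ → ℝ) h
    have e4 : ℓ + k + 2 + ℓ + 1 = ℓ + k + ℓ + 3 := by omega
    have e5 : ℓ + k + ℓ + 1 = ℓ + k + ℓ + 1 := rfl
    have e6 : ℓ + k + 1 + ℓ + 1 = ℓ + k + ℓ + 2 := by omega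
    rw [e4, e6]
    linear_combination h' * y ^ ℓ
  rw [Finset.sum_add_distrib] at hmain
  rw [Finset.sum_add_distrib] at hmain
  -- compute the explicit top coefficients
  have c1 : ((n+2+(n+1)+1).choose (n+2-(n+1)) : ℝ) = (2*n+4 : ℕ) := by
    have : n+2-(n+1) = 1 := by omega
    rw [this]
    rw [Nat.choose_one_right]
    push_cast; ring
  have c2 : ((n+2+(n+1+1)+1).choose (n+2-(n+1+1)) : ℝ) = 1 := by
    have : n+2-(n+1+1) = 0 := by omega
    rw [this, Nat.choose_zero_right]; norm_num
  have c3 : ((n+(n+1)+1).choose (n+2-(n+1)) : ℝ) = (2*n+2 : ℕ) := by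
    have : n+2-(n+1) = 1 := by omega
    rw [this]
    rw [Nat.choose_one_right]
    push_cast; ring
  have c4 : ((n+(n+1+1)+1).choose (n+2-(n+1+1)) : ℝ) = 1 := by
    have : n+2-(n+1+1) = 0 := by omega
    rw [this, Nat.choose_zero_right]; norm_num
  have c5 : ((n+1+(n+1)+1).choose (n+1-(n+1)) : ℝ) = 1 := by
    have : n+1-(n+1) = 0 := by omega
    rw [this, Nat.choose_zero_right]; norm_num
  rw [c1, c2, c3, c4, c5]
  rw [← Finset.mul_sum] at hmain
  push_cast
  linarith [hmain]

theorem chebyshev_U_expansion (n : ℕ) (x : ℝ) :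
    (U ℝ (n : ℤ)).eval x =
      ∑ ℓ ∈ Finset.range (n + 1),
        (Nat.choose (n + ℓ + 1) (n - ℓ) : ℝ) * (2 * (x - 1)) ^ ℓ := by
  induction n using Nat.twoStepInduction with
  | zero => simp
  | one =>
    simp [Finset.sum_range_succ]
    ring
  | more n ih1 ih2 =>
    have hU : ((n : ℕ) + 2 : ℤ) = (n : ℤ) + 2 := by push_cast; ring
    have hrec : (U ℝ ((n + 2 : ℕ) : ℤ)).eval x
        = 2 * x * (U ℝ ((n + 1 : ℕ) : ℤ)).eval x - (U ℝ ((n : ℕ) : ℤ)).eval x := by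
      have : ((n + 2 : ℕ) : ℤ) = (n : ℤ) + 2 := by push_cast; ring
      rw [this, U_add_two]
      have h1 : ((n + 1 : ℕ) : ℤ) = (n : ℤ) + 1 := by push_cast; ring
      simp only [h1, eval_sub, eval_mul, eval_ofNat, eval_X]
    rw [hrec, ih1, ih2]
    have := sum_rec n (2 * (x - 1))
    have e : (2 * (x - 1) + 2) = 2 * x := by ring
    rw [e] at this
    have e2 : n + 2 + 1 = n + 3 := rfl
    rw [e2]
    linarith [this]
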